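/- Fix a real number λ > 0. For k ∈ ℕ define γ_k := √(ln(4k/π²)/(k·λ)), β_k := 1/(2√k), p_k := cos(2β_k), q_k := sin(2β_k), and c_k := cos(γ_k). Then the complex sequence A_k := (p_k + i·q_k·(c_k)^{kλ})^k converges, as k → ∞, to exp(−1/2 + i·π/2) = i·e^{−1/2}. -/

import Mathlib

open Filter

set_option maxHeartbeats 1000000

lemma qal_pow_tendsto_exp {z : ℕ → ℂ} {w : ℂ}
    (h : Tendsto (fun n : ℕ => (n : ℂ) * (z n - 1)) atTop (nhds w)) :
    Tendsto (fun n : ℕ => z n ^ n) atTop (nhds (Complex.exp w)) := by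
  have hinv : Tendsto (fun n : ℕ => ((n : ℝ)⁻¹ : ℂ)) atTop (nhds 0) := by
    have := (Complex.continuous_ofReal.tendsto 0).comp tendsto_inv_atTop_nhds_zero_nat
    simpa [Function.comp_def] using this
  have hz0 : Tendsto (fun n : ℕ => z n - 1) atTop (nhds 0) := by
    have hmul := hinv.mul h
    rw [zero_mul] at hmul
    refine hmul.congr' ?_
    filter_upwards [eventually_ge_atTop 1] with n hn
    have hn0 : (n : ℂ) ≠ 0 := Nat.cast_ne_zero.2 (by omega)
    push_cast
    field_simp
  have hz1 : Tendsto z atTop (nhds 1) := by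
    have := hz0.add (tendsto_const_nhds : Tendsto (fun _ : ℕ => (1:ℂ)) atTop (nhds 1))
    simpa using this
  set f : ℂ → ℂ := fun y => if y = 1 then 1 else Complex.log y / (y - 1) with hf_def
  have hf : Tendsto f (nhds 1) (nhds 1) := by
    have h1 : Tendsto f (nhdsWithin 1 {1}ᶜ) (nhds 1) := by
      have hd : HasDerivAt Complex.log 1 1 := by
        simpa using Complex.hasDerivAt_log Complex.one_mem_slitPlane
      rw [hasDerivAt_iff_tendsto_slope] at hd
      refine hd.congr' ?_
      filter_upwards [self_mem_nhdsWithin] with y hy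
      simp only [Set.mem_compl_iff, Set.mem_singleton_iff] at hy
      simp [f, hy, slope_def_field, Complex.log_one]
    have h2 : Tendsto f (pure 1) (nhds 1) := by
      have : f 1 = 1 := by simp [f]
      simpa [this] using tendsto_pure_nhds f 1
    have := h1.sup h2
    rwa [nhdsNE_sup_pure] at this
  have hlog : Tendsto (fun n : ℕ => (n : ℂ) * Complex.log (z n)) atTop (nhds w) := by
    have hmul := h.mul (hf.comp hz1)
    rw [mul_one] at hmul
    refine hmul.congr ?_
    intro n
    by_cases hzn : z n = 1
    · simp [f, hzn, Complex.log_one]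
    · have : z n - 1 ≠ 0 := sub_ne_zero.2 hzn
      simp only [Function.comp_apply, hf_def, hzn, if_false]
      rw [mul_assoc, mul_div_cancel₀ _ this]
  have hne : ∀ᶠ n in atTop, z n ≠ 0 := hz1.eventually (eventually_ne_nhds one_ne_zero)
  have hexp := (Complex.continuous_exp.tendsto w).comp hlog
  refine hexp.congr' ?_
  filter_upwards [hne] with n hn
  simp only [Function.comp]
  rw [Complex.exp_nat_mul, Complex.exp_log hn]

lemma qal_sin_div : Tendsto (fun t : ℝ => Real.sin t / t) (nhdsWithin 0 {0}ᶜ) (nhds 1) := by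
  have hd := Real.hasDerivAt_sin 0
  rw [hasDerivAt_iff_tendsto_slope, Real.cos_zero] at hd
  refine hd.congr fun t => ?_
  simp [slope_def_field]

lemma qal_log_cos_bound {x : ℝ} (hx : 0 < x) (hx1 : x ≤ 1) :
    |Real.log (Real.cos x) + x ^ 2 / 2| ≤ x ^ 4 / 2 := by
  have hxabs : |x| ≤ 1 := by rw [abs_of_pos hx]; exact hx1
  have hb := Real.cos_bound hxabs
  rw [abs_of_pos hx] at hb
  have hge : 1 - x ^ 2 / 2 ≤ Real.cos x := Real.one_sub_sq_div_two_le_cos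
  have hhalf : (1:ℝ)/2 ≤ Real.cos x := by nlinarith
  have hcpos : 0 < Real.cos x := by linarith
  have hlog_le : Real.log (Real.cos x) ≤ Real.cos x - 1 := Real.log_le_sub_one_of_pos hcpos
  have hlog_ge : (Real.cos x - 1) / Real.cos x ≤ Real.log (Real.cos x) := by
    have h2 := Real.log_le_sub_one_of_pos (inv_pos.2 hcpos)
    rw [Real.log_inv] at h2
    have : 1 - (Real.cos x)⁻¹ ≤ Real.log (Real.cos x) := by linarith
    have heq : (Real.cos x - 1) / Real.cos x = 1 - (Real.cos x)⁻¹ := by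
      field_simp
    linarith [heq ▸ this]
  have habs := abs_le.1 hb
  rw [abs_le]
  constructor
  · have hdiv : -(x ^ 2 / 2) - x ^ 4 / 2 ≤ (Real.cos x - 1) / Real.cos x := by
      rw [le_div_iff₀ hcpos]
      nlinarith [sq_nonneg x, sq_nonneg (x^2)]
    linarith
  · nlinarith [pow_pos hx 4]

/-- **Limit of the depth-1 QAOA amplitude.** Fix `λ > 0`. With
`γ_k = √(ln(4k/π²)/(kλ))`, `β_k = 1/(2√k)`, `p_k = cos(2β_k)`, `q_k = sin(2β_k)`,
`c_k = cos(γ_k)`, the complex sequence `A_k = (p_k + i·q_k·c_k^{kλ})^k` converges, as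
`k → ∞`, to `exp(-1/2 + i·π/2) = i·e^{-1/2}`. Here `c_k^{kλ}` is a real power (rpow). -/
theorem qaoa_amplitude_limit (lam : ℝ) (hlam : 0 < lam) :
    Tendsto (fun k : ℕ =>
        (((Real.cos (2 * (1 / (2 * Real.sqrt k)))) : ℂ)
          + Complex.I * ((Real.sin (2 * (1 / (2 * Real.sqrt k)))) : ℂ)
            * (((Real.cos (Real.sqrt (Real.log (4 * k / Real.pi ^ 2) / (k * lam))))
                ^ ((k : ℝ) * lam) : ℝ) : ℂ)) ^ k)
      atTop (nhds (Complex.exp (-(1 / 2) + Complex.I * Real.pi / 2))) := by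
  have hpi : (0:ℝ) < Real.pi := Real.pi_pos
  set L : ℕ → ℝ := fun k => Real.log (4 * k / Real.pi ^ 2) with hL_def
  set γ : ℕ → ℝ := fun k => Real.sqrt (L k / (k * lam)) with hγ_def
  set C : ℕ → ℝ := fun k => Real.cos (γ k) ^ ((k:ℝ) * lam) with hC_def
  have hy : Tendsto (fun k : ℕ => 4 * (k:ℝ) / Real.pi ^ 2) atTop atTop :=
    (tendsto_natCast_atTop_atTop.const_mul_atTop (by norm_num)).atTop_div_const (by positivity)
  have hL : Tendsto L atTop atTop := Real.tendsto_log_atTop.comp hy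
  have hq : ∀ n : ℕ, Tendsto (fun k : ℕ => L k ^ n / ((k:ℝ) * lam)) atTop (nhds 0) := by
    intro n
    have hbase := Real.tendsto_pow_log_div_mul_add_atTop (lam * Real.pi ^ 2 / 4) 0 n
      (by positivity)
    have hcomp := hbase.comp hy
    refine hcomp.congr' ?_
    filter_upwards [eventually_ge_atTop 1] with k hk
    have hk0 : (0:ℝ) < k := by exact_mod_cast Nat.lt_of_lt_of_le Nat.zero_lt_one hk
    simp only [Function.comp, hL_def, add_zero]
    congr 1
    field_simp
  have hq1 : Tendsto (fun k : ℕ => L k / ((k:ℝ) * lam)) atTop (nhds 0) := by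
    have := hq 1
    simp only [pow_one] at this
    exact this
  have hγ0 : Tendsto γ atTop (nhds 0) := by
    have h := (Real.continuous_sqrt.tendsto 0).comp hq1
    rw [Real.sqrt_zero] at h
    exact h.congr fun k => rfl
  have hφ : Tendsto (fun k : ℕ => (k:ℝ) * lam * Real.log (Real.cos (γ k)) + L k / 2)
      atTop (nhds 0) := by
    have hbound : Tendsto (fun k : ℕ => L k ^ 2 / ((k:ℝ) * lam) / 2) atTop (nhds 0) := by
      have h2 := (hq 2).div_const 2
      rwa [zero_div] at h2
    refine squeeze_zero_norm' ?_ hbound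
    filter_upwards [hL.eventually_gt_atTop 0, hγ0.eventually_le_const (by norm_num : (0:ℝ) < 1),
      eventually_ge_atTop 1] with k hLk hγ1 hk
    have hk0 : (0:ℝ) < k := by exact_mod_cast Nat.lt_of_lt_of_le Nat.zero_lt_one hk
    have hklam : (0:ℝ) < (k:ℝ) * lam := by positivity
    have hγpos : 0 < γ k := Real.sqrt_pos.2 (div_pos hLk hklam)
    have hsq : γ k ^ 2 = L k / ((k:ℝ) * lam) := Real.sq_sqrt (le_of_lt (div_pos hLk hklam))
    have key := qal_log_cos_bound hγpos hγ1
    have heq : (k:ℝ) * lam * Real.log (Real.cos (γ k)) + L k / 2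
        = (k:ℝ) * lam * (Real.log (Real.cos (γ k)) + γ k ^ 2 / 2) := by
      have hL' : (k:ℝ) * lam * γ k ^ 2 = L k := by
        rw [hsq, mul_div_cancel₀ _ (ne_of_gt hklam)]
      nlinarith [hL']
    rw [Real.norm_eq_abs, heq, abs_mul, abs_of_pos hklam]
    calc (k:ℝ) * lam * |Real.log (Real.cos (γ k)) + γ k ^ 2 / 2|
        ≤ (k:ℝ) * lam * (γ k ^ 4 / 2) := by
          exact mul_le_mul_of_nonneg_left key (le_of_lt hklam)
      _ = L k ^ 2 / ((k:ℝ) * lam) / 2 := by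
          have hL' : (k:ℝ) * lam * γ k ^ 2 = L k := by
            rw [hsq, mul_div_cancel₀ _ (ne_of_gt hklam)]
          rw [show (k:ℝ) * lam * (γ k ^ 4 / 2) = ((k:ℝ)*lam*γ k^2) * ((k:ℝ)*lam*γ k^2) / ((k:ℝ)*lam) / 2
            from by field_simp, hL']
          ring
  -- S2 : sqrt k * C k → π/2
  have hS2 : Tendsto (fun k : ℕ => Real.sqrt k * C k) atTop (nhds (Real.pi / 2)) := by
    have hexp : Tendsto (fun k : ℕ => Real.exp (Real.log (Real.pi / 2)
        + ((k:ℝ) * lam * Real.log (Real.cos (γ k)) + L k / 2))) atTop (nhds (Real.pi / 2)) := by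
      have h := (Real.continuous_exp.tendsto _).comp
        ((tendsto_const_nhds (x := Real.log (Real.pi / 2))).add hφ)
      rw [add_zero, Real.exp_log (by positivity : (0:ℝ) < Real.pi / 2)] at h
      exact h.congr fun k => rfl
    refine hexp.congr' ?_
    filter_upwards [eventually_ge_atTop 1, hγ0.eventually_le_const (by norm_num : (0:ℝ) < 1)]
      with k hk hγ1
    have hk0 : (0:ℝ) < k := by exact_mod_cast Nat.lt_of_lt_of_le Nat.zero_lt_one hk
    have hγnn : 0 ≤ γ k := Real.sqrt_nonneg _
    have hcpos : 0 < Real.cos (γ k) := by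
      have := Real.one_sub_sq_div_two_le_cos (x := γ k)
      nlinarith
    have hClog : C k = Real.exp (Real.log (Real.cos (γ k)) * ((k:ℝ) * lam)) :=
      Real.rpow_def_of_pos hcpos _
    have hsqrtpos : 0 < Real.sqrt k := Real.sqrt_pos.2 hk0
    have hlogid : Real.log (Real.sqrt k) = Real.log (Real.pi / 2) + L k / 2 := by
      rw [Real.log_sqrt (le_of_lt hk0), hL_def]
      beta_reduce
      have h4 : Real.log (4 * (k:ℝ) / Real.pi ^ 2)
          = Real.log 4 + Real.log k - 2 * Real.log Real.pi := by
        rw [Real.log_div (by positivity) (by positivity),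
          Real.log_mul (by norm_num) (ne_of_gt hk0), Real.log_pow]
        push_cast; ring
      have h2 : Real.log (Real.pi / 2) = Real.log Real.pi - Real.log 2 :=
        Real.log_div (ne_of_gt hpi) two_ne_zero
      have h42 : Real.log 4 = 2 * Real.log 2 := by
        rw [show (4:ℝ) = 2 ^ 2 by norm_num, Real.log_pow]; push_cast; ring
      rw [h4, h2, h42]; ring
    rw [hClog, ← Real.exp_log hsqrtpos, ← Real.exp_add, hlogid]
    ring_nf
  -- sqrt k → ∞
  have hsqrt : Tendsto (fun k : ℕ => Real.sqrt k) atTop atTop := by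
    refine tendsto_atTop_atTop.2 fun b => ⟨(⌈b⌉₊) ^ 2, fun k hk => ?_⟩
    have h1 : ((⌈b⌉₊:ℝ)) ^ 2 ≤ (k:ℝ) := by exact_mod_cast hk
    calc b ≤ (⌈b⌉₊:ℝ) := Nat.le_ceil b
      _ = Real.sqrt ((⌈b⌉₊:ℝ) ^ 2) := (Real.sqrt_sq (Nat.cast_nonneg _)).symm
      _ ≤ Real.sqrt k := Real.sqrt_le_sqrt h1
  have ht : Tendsto (fun k : ℕ => 1 / (2 * Real.sqrt k)) atTop (nhdsWithin 0 {0}ᶜ) := by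
    rw [tendsto_nhdsWithin_iff]
    constructor
    · have h := (hsqrt.const_mul_atTop (by norm_num : (0:ℝ) < 2)).inv_tendsto_atTop
      exact h.congr fun k => (one_div _).symm
    · filter_upwards [eventually_ge_atTop 1] with k hk
      have hk0 : (0:ℝ) < k := by exact_mod_cast Nat.lt_of_lt_of_le Nat.zero_lt_one hk
      have hs : 0 < Real.sqrt k := Real.sqrt_pos.2 hk0
      have hpos : 0 < 1 / (2 * Real.sqrt k) := by positivity
      simp only [Set.mem_compl_iff, Set.mem_singleton_iff]
      exact ne_of_gt hpos
  have hx : Tendsto (fun k : ℕ => 2 * (1 / (2 * Real.sqrt k))) atTop (nhdsWithin 0 {0}ᶜ) := by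
    rw [tendsto_nhdsWithin_iff] at ht ⊢
    constructor
    · have h := ht.1.const_mul (2:ℝ)
      simpa using h
    · filter_upwards [ht.2] with k hk
      simp only [Set.mem_compl_iff, Set.mem_singleton_iff] at hk ⊢
      intro h; exact hk (by linarith)
  have hsin_t : Tendsto (fun k : ℕ =>
      Real.sin (1 / (2 * Real.sqrt k)) / (1 / (2 * Real.sqrt k))) atTop (nhds 1) :=
    qal_sin_div.comp ht
  have hsin_x : Tendsto (fun k : ℕ =>
      Real.sin (2 * (1 / (2 * Real.sqrt k))) / (2 * (1 / (2 * Real.sqrt k)))) atTop (nhds 1) :=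
    qal_sin_div.comp hx
  have ha : Tendsto (fun k : ℕ => (k:ℝ) * (Real.cos (2 * (1 / (2 * Real.sqrt k))) - 1))
      atTop (nhds (-(1/2))) := by
    have hlim := ((hsin_t.mul hsin_t).neg).div_const 2
    have hval : -((1:ℝ) * 1) / 2 = -(1/2) := by norm_num
    rw [hval] at hlim
    refine hlim.congr' ?_
    filter_upwards [eventually_ge_atTop 1] with k hk
    have hk0 : (0:ℝ) < k := by exact_mod_cast Nat.lt_of_lt_of_le Nat.zero_lt_one hk
    obtain ⟨s, hseq, hs, hs2⟩ : ∃ s : ℝ, Real.sqrt (k:ℝ) = s ∧ 0 < s ∧ s ^ 2 = (k:ℝ) :=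
      ⟨_, rfl, Real.sqrt_pos.2 hk0, Real.sq_sqrt (le_of_lt hk0)⟩
    simp only [hseq]
    rw [← hs2]
    have hsne : s ≠ 0 := ne_of_gt hs
    have hcos : Real.cos (2 * (1 / (2 * s))) = 1 - 2 * Real.sin (1 / (2 * s)) ^ 2 := by
      rw [Real.cos_two_mul']
      have h := Real.sin_sq_add_cos_sq (1 / (2 * s))
      linarith
    rw [hcos]
    field_simp
    ring
  have hb : Tendsto (fun k : ℕ =>
      (k:ℝ) * (Real.sin (2 * (1 / (2 * Real.sqrt k))) * C k)) atTop (nhds (Real.pi / 2)) := by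
    have hlim := hsin_x.mul hS2
    rw [one_mul] at hlim
    refine hlim.congr' ?_
    filter_upwards [eventually_ge_atTop 1] with k hk
    have hk0 : (0:ℝ) < k := by exact_mod_cast Nat.lt_of_lt_of_le Nat.zero_lt_one hk
    obtain ⟨s, hseq, hs, hs2⟩ : ∃ s : ℝ, Real.sqrt (k:ℝ) = s ∧ 0 < s ∧ s ^ 2 = (k:ℝ) :=
      ⟨_, rfl, Real.sqrt_pos.2 hk0, Real.sq_sqrt (le_of_lt hk0)⟩
    simp only [hseq]
    rw [← hs2]
    have hsne : s ≠ 0 := ne_of_gt hs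
    have harg : 2 * (1 / (2 * s)) = 1 / s := by field_simp
    rw [harg]
    field_simp
  apply qal_pow_tendsto_exp
  have hca : Tendsto (fun k : ℕ =>
      ((((k:ℝ) * (Real.cos (2 * (1 / (2 * Real.sqrt k))) - 1) : ℝ)) : ℂ)) atTop
      (nhds (((-(1/2) : ℝ) : ℂ))) := (Complex.continuous_ofReal.tendsto _).comp ha
  have hcb : Tendsto (fun k : ℕ =>
      Complex.I * ((((k:ℝ) * (Real.sin (2 * (1 / (2 * Real.sqrt k))) * C k) : ℝ)) : ℂ)) atTop
      (nhds (Complex.I * ((Real.pi / 2 : ℝ) : ℂ))) :=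
    ((Complex.continuous_ofReal.tendsto _).comp hb).const_mul Complex.I
  have hcomb := hca.add hcb
  have hval : (((-(1/2) : ℝ) : ℂ)) + Complex.I * ((Real.pi / 2 : ℝ) : ℂ)
      = -(1 / 2) + Complex.I * Real.pi / 2 := by
    push_cast; ring
  rw [hval] at hcomb
  refine hcomb.congr fun k => ?_
  push_cast
  ring
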